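/- Let ρ be a positive semidefinite operator on a finite-dimensional Hilbert space and ψ a unit vector in the range of ρ. Then the maximal Λ ≥ 0 such that ρ − Λ|ψ⟩⟨ψ| ≥ 0 equals 1/⟨ψ|ρ⁻¹|ψ⟩, where ρ⁻¹ denotes the pseudo-inverse of ρ. -/

import Mathlib

open Matrix ComplexOrder

theorem stmt_8 {n : ℕ} (ρ ρinv : Matrix (Fin n) (Fin n) ℂ)
    (hρ : ρ.PosSemidef)
    -- Moore–Penrose pseudo-inverse conditions
    (hmp1 : ρ * ρinv * ρ = ρ) (hmp2 : ρinv * ρ * ρinv = ρinv)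
    (hmp3 : (ρ * ρinv).IsHermitian) (hmp4 : (ρinv * ρ).IsHermitian)
    (ψ : Fin n → ℂ) (hunit : star ψ ⬝ᵥ ψ = 1)
    (hrange : ∃ v, ρ.mulVec v = ψ)
    (Λ : ℝ) (hΛ : (Λ : ℂ) = (star ψ ⬝ᵥ ρinv.mulVec ψ)⁻¹) :
    IsGreatest {l : ℝ | 0 ≤ l ∧ (ρ - l • Matrix.vecMulVec ψ (star ψ)).PosSemidef} Λ := by
  obtain ⟨v, hv⟩ := hrange
  obtain ⟨w, hwdef⟩ : ∃ w, w = ρinv.mulVec ψ := ⟨_, rfl⟩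
  rw [← hwdef] at hΛ
  have hw : ρ.mulVec w = ψ := by
    rw [hwdef, mulVec_mulVec, ← hv, mulVec_mulVec, hmp1]
  have hherm : ρᴴ = ρ := hρ.1
  have hψρ : star ψ = star w ᵥ* ρ := by
    conv_lhs => rw [← hw]
    rw [star_mulVec, hherm]
  have hkey : ∀ x : Fin n → ℂ, star w ⬝ᵥ ρ.mulVec x = star ψ ⬝ᵥ x := by
    intro x
    rw [dotProduct_mulVec, ← hψρ]
  obtain ⟨c, hcdef⟩ : ∃ c, c = star ψ ⬝ᵥ w := ⟨_, rfl⟩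
  rw [← hcdef] at hΛ
  have hc0 : 0 ≤ c := by
    have := hρ.dotProduct_mulVec_nonneg w
    rwa [hkey w, ← hcdef] at this
  have hcne : c ≠ 0 := by
    intro hc
    have h1 : ρ.mulVec w = 0 := by
      rw [← hρ.dotProduct_mulVec_zero_iff, hkey w, ← hcdef, hc]
    rw [hw] at h1
    rw [h1] at hunit
    simp at hunit
  have hcim : c.im = 0 := by
    have := hc0
    rw [Complex.le_def] at this
    simpa using this.2.symm
  have hcreal : (c.re : ℂ) = c := Complex.ext (by simp) (by simp [hcim])
  have hcrepos : 0 < c.re := by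
    rcases (Complex.le_def.mp hc0).1.lt_or_eq with h | h
    · simpa using h
    · exfalso; apply hcne; rw [← hcreal, ← h]; simp
  have hΛval : Λ = (c.re)⁻¹ := by
    have h2 : (Λ : ℂ) = ((c.re)⁻¹ : ℝ) := by
      rw [hΛ]
      conv_lhs => rw [← hcreal]
      push_cast
      ring
    exact_mod_cast h2
  have hcstar : star c = c := by rw [← hcreal]; exact Complex.conj_ofReal _
  have hstarwψ : star w ⬝ᵥ ψ = c := by
    rw [star_dotProduct, ← hcdef, hcstar]
  -- quadratic form computation
  have hquad : ∀ (l : ℝ) (x : Fin n → ℂ),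
      star x ⬝ᵥ (ρ - l • Matrix.vecMulVec ψ (star ψ)).mulVec x
        = star x ⬝ᵥ ρ.mulVec x - (l : ℂ) * (star x ⬝ᵥ ψ) * (star ψ ⬝ᵥ x) := by
    intro l x
    have hP : (Matrix.vecMulVec ψ (star ψ)).mulVec x = (star ψ ⬝ᵥ x) • ψ := by
      funext i
      simp [vecMulVec, mulVec, dotProduct, Finset.mul_sum, mul_comm, mul_assoc, mul_left_comm]
    rw [sub_mulVec, dotProduct_sub, smul_mulVec, hP]
    rw [dotProduct_smul, dotProduct_smul]
    simp only [smul_eq_mul, Complex.real_smul]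
    ring
  -- hermitian of the difference
  have hhermdiff : ∀ l : ℝ, (ρ - l • Matrix.vecMulVec ψ (star ψ)).IsHermitian := by
    intro l
    refine IsHermitian.sub hρ.1 ?_
    ext i j
    simp [conjTranspose_apply, vecMulVec_apply, mul_comm]
  constructor
  · -- membership
    refine ⟨by rw [hΛval]; positivity, PosSemidef.of_dotProduct_mulVec_nonneg (hhermdiff Λ) fun x => ?_⟩
    obtain ⟨s, hsdef⟩ : ∃ s, s = star ψ ⬝ᵥ x := ⟨_, rfl⟩
    have hsx : star x ⬝ᵥ ψ = star s := by rw [hsdef]; exact star_dotProduct x ψ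
    rw [hquad Λ x, hsx, ← hsdef, hΛ]
    obtain ⟨y, hydef⟩ : ∃ y, y = x - (s / c) • w := ⟨_, rfl⟩
    have hy : star y ⬝ᵥ ρ.mulVec y
        = star x ⬝ᵥ ρ.mulVec x - star s * s / c := by
      rw [hydef, mulVec_sub, mulVec_smul, hw, star_sub, star_smul]
      rw [sub_dotProduct, dotProduct_sub, dotProduct_sub, smul_dotProduct, smul_dotProduct,
        dotProduct_smul, dotProduct_smul, hsx, hkey x, ← hsdef, hstarwψ]
      simp only [star_div₀, hcstar, smul_eq_mul]
      field_simp
      ring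
    have h0 : (0 : ℂ) ≤ star y ⬝ᵥ ρ.mulVec y := hρ.dotProduct_mulVec_nonneg y
    rw [hy] at h0
    have heq : star x ⬝ᵥ ρ.mulVec x - c⁻¹ * star s * s
        = star x ⬝ᵥ ρ.mulVec x - star s * s / c := by ring
    rw [heq]
    exact h0
  · -- upper bound
    rintro l ⟨hl0, hlpsd⟩
    have hq := hlpsd.dotProduct_mulVec_nonneg w
    rw [hquad l w, hkey w, ← hcdef, hstarwψ] at hq
    have hre : 0 ≤ (c - (l : ℂ) * c * c).re := (Complex.le_def.mp hq).1
    have hre' : (c - (l : ℂ) * c * c).re = c.re - l * c.re * c.re := by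
      simp [Complex.sub_re, Complex.mul_re, hcim]
    rw [hre'] at hre
    rw [hΛval, inv_eq_one_div, le_div_iff₀ hcrepos]
    nlinarith
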